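/- In the graded ring R = ℤ[x, y]/(x^{k+1}, y^{l+1}) with deg x = deg y = 1, suppose c_1, …, c_a and d_1, …, d_b are homogeneous elements with c_i ∈ R_i, d_j ∈ R_j, a + b ≤ min(k, l), and (1 + c_1 + ⋯ + c_a)(1 + d_1 + ⋯ + d_b) = 1. Then all c_i = 0 and all d_j = 0. -/

import Mathlib

noncomputable section

open MvPolynomial

/-- The defining ideal `(x^{k+1}, y^{l+1})` of the Chow ring of `ℙ^k × ℙ^l`,
where `x = X 0` and `y = X 1`. -/
def prodProjIdeal (k l : ℕ) : Ideal (MvPolynomial (Fin 2) ℤ) :=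
  Ideal.span {X 0 ^ (k + 1), X 1 ^ (l + 1)}

/-- The Chow ring `ℤ[x,y]/(x^{k+1}, y^{l+1})` of `ℙ^k × ℙ^l`, with `deg x = deg y = 1`. -/
abbrev ProdProjRing (k l : ℕ) : Type := MvPolynomial (Fin 2) ℤ ⧸ prodProjIdeal k l

/-- An element of `ProdProjRing k l` is homogeneous of degree `i` if it is the class of
a homogeneous polynomial of degree `i`. -/
def ProdProjRing.IsHomogeneous (k l : ℕ) (x : ProdProjRing k l) (i : ℕ) : Prop :=
  ∃ P : MvPolynomial (Fin 2) ℤ, P.IsHomogeneous i ∧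
    Ideal.Quotient.mk (prodProjIdeal k l) P = x

open Finset in
/-- Core Whitney-cancellation lemma in a polynomial ring over a domain. -/
lemma whitney_core {σ : Type*} {S : Type*} [CommRing S] [IsDomain S]
    (a b : ℕ) (P Q : ℕ → MvPolynomial σ S)
    (hP : ∀ i, (P i).IsHomogeneous i) (hQ : ∀ j, (Q j).IsHomogeneous j)
    (hP0 : P 0 = 1) (hQ0 : Q 0 = 1)
    (hmul : (∑ i ∈ range (a + 1), P i) * (∑ j ∈ range (b + 1), Q j) = 1) :
    (∀ i, 1 ≤ i → i ≤ a → P i = 0) ∧ (∀ j, 1 ≤ j → j ≤ b → Q j = 0) := by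
  classical
  set m := Nat.findGreatest (fun i => P i ≠ 0) a with hm
  set n := Nat.findGreatest (fun j => Q j ≠ 0) b with hn
  have hPm : P m ≠ 0 := by
    rcases eq_or_ne m 0 with h0 | h0
    · rw [h0, hP0]; exact one_ne_zero
    · exact Nat.findGreatest_of_ne_zero hm.symm h0
  have hQn : Q n ≠ 0 := by
    rcases eq_or_ne n 0 with h0 | h0
    · rw [h0, hQ0]; exact one_ne_zero
    · exact Nat.findGreatest_of_ne_zero hn.symm h0
  have hma : m ≤ a := Nat.findGreatest_le a
  have hnb : n ≤ b := Nat.findGreatest_le b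
  have hPgt : ∀ i, m < i → i ≤ a → P i = 0 := fun i h1 h2 => by
    have := Nat.findGreatest_is_greatest (P := fun i => P i ≠ 0) h1 h2
    simpa using this
  have hQgt : ∀ j, n < j → j ≤ b → Q j = 0 := fun j h1 h2 => by
    have := Nat.findGreatest_is_greatest (P := fun j => Q j ≠ 0) h1 h2
    simpa using this
  have hmn : m = 0 ∧ n = 0 := by
    by_contra hcon
    have hpos : 0 < m + n := by omega
    have h1 : homogeneousComponent (m + n)
        ((∑ i ∈ range (a + 1), P i) * (∑ j ∈ range (b + 1), Q j)) = 0 := by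
      rw [hmul]
      apply homogeneousComponent_eq_zero
      simpa using hpos
    rw [Finset.sum_mul_sum] at h1
    rw [map_sum] at h1
    simp_rw [map_sum] at h1
    have hterm : ∀ i j : ℕ,
        homogeneousComponent (m + n) (P i * Q j)
          = if m + n = i + j then P i * Q j else 0 := by
      intro i j
      exact homogeneousComponent_of_mem
        ((mem_homogeneousSubmodule _ _).mpr ((hP i).mul (hQ j)))
    simp_rw [hterm] at h1
    have h2 : (∑ i ∈ range (a + 1), ∑ j ∈ range (b + 1),
        if m + n = i + j then P i * Q j else 0) = P m * Q n := by
      rw [Finset.sum_eq_single_of_mem m (Finset.mem_range.mpr (by omega))]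
      · rw [Finset.sum_eq_single_of_mem n (Finset.mem_range.mpr (by omega))]
        · simp
        · intro j hj hjn
          rcases eq_or_ne (m + n) (m + j) with he | he
          · omega
          · rw [if_neg he]
      · intro i hi him
        apply Finset.sum_eq_zero
        intro j hj
        rcases eq_or_ne (m + n) (i + j) with he | he
        · rcases lt_or_gt_of_ne him with hlt | hgt
          · -- i < m, so j > n, Q j = 0
            have : n < j := by omega
            rw [hQgt j this (by simpa using Nat.lt_succ_iff.mp (Finset.mem_range.mp hj))]
            simp
          · rw [hPgt i hgt (Nat.lt_succ_iff.mp (Finset.mem_range.mp hi))]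
            simp
        · simp [he]
    rw [h2] at h1
    rcases mul_eq_zero.mp h1 with h | h
    · exact hPm h
    · exact hQn h
  constructor
  · intro i h1 h2; exact hPgt i (by omega) h2
  · intro j h1 h2; exact hQgt j (by omega) h2

open Finset in
/-- Whitney cancellation with `1 + Σ` normalization. -/
lemma whitney_poly {σ : Type*} {S : Type*} [CommRing S] [IsDomain S]
    (a b : ℕ) (P Q : ℕ → MvPolynomial σ S)
    (hP : ∀ i ∈ Icc 1 a, (P i).IsHomogeneous i)
    (hQ : ∀ j ∈ Icc 1 b, (Q j).IsHomogeneous j)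
    (hmul : (1 + ∑ i ∈ Icc 1 a, P i) * (1 + ∑ j ∈ Icc 1 b, Q j) = 1) :
    (∀ i ∈ Icc 1 a, P i = 0) ∧ (∀ j ∈ Icc 1 b, Q j = 0) := by
  classical
  set P' : ℕ → MvPolynomial σ S :=
    fun i => if i = 0 then 1 else if i ∈ Icc 1 a then P i else 0 with hP'
  set Q' : ℕ → MvPolynomial σ S :=
    fun j => if j = 0 then 1 else if j ∈ Icc 1 b then Q j else 0 with hQ'
  have key : ∀ (e : ℕ) (R : ℕ → MvPolynomial σ S),
      (∑ i ∈ range (e + 1), (if i = 0 then 1 else if i ∈ Icc 1 e then R i else 0))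
        = 1 + ∑ i ∈ Icc 1 e, R i := by
    intro e R
    have hsplit : ∀ i, (if i = 0 then (1 : MvPolynomial σ S) else if i ∈ Icc 1 e then R i else 0)
        = (if i = 0 then 1 else 0) + (if i ∈ Icc 1 e then R i else 0) := by
      intro i
      rcases eq_or_ne i 0 with rfl | h
      · simp
      · simp [h]
    simp_rw [hsplit]
    rw [Finset.sum_add_distrib,
      Finset.sum_ite_eq' (Finset.range (e + 1)) 0 (fun _ => (1 : MvPolynomial σ S)),
      Finset.sum_ite_mem]
    have hinter : Finset.range (e + 1) ∩ Icc 1 e = Icc 1 e := by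
      apply Finset.inter_eq_right.mpr
      intro i hi
      simp only [Finset.mem_Icc] at hi
      exact Finset.mem_range.mpr (by omega)
    rw [hinter]
    simp
  have hmul' : (∑ i ∈ range (a + 1), P' i) * (∑ j ∈ range (b + 1), Q' j) = 1 := by
    rw [hP', hQ', key a P, key b Q]; exact hmul
  have hhP : ∀ i, (P' i).IsHomogeneous i := by
    intro i
    simp only [hP']
    by_cases h0 : i = 0
    · subst h0; simpa using isHomogeneous_one σ S
    · rw [if_neg h0]
      by_cases h1 : i ∈ Icc 1 a
      · rw [if_pos h1]; exact hP i h1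
      · rw [if_neg h1]; exact isHomogeneous_zero σ S i
  have hhQ : ∀ j, (Q' j).IsHomogeneous j := by
    intro j
    simp only [hQ']
    by_cases h0 : j = 0
    · subst h0; simpa using isHomogeneous_one σ S
    · rw [if_neg h0]
      by_cases h1 : j ∈ Icc 1 b
      · rw [if_pos h1]; exact hQ j h1
      · rw [if_neg h1]; exact isHomogeneous_zero σ S j
  obtain ⟨hc1, hc2⟩ := whitney_core a b P' Q' hhP hhQ (by simp [hP']) (by simp [hQ']) hmul'
  constructor
  · intro i hi
    have hi' := Finset.mem_Icc.mp hi
    have := hc1 i hi'.1 hi'.2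
    simp only [hP', if_neg (show ¬ i = 0 by omega), if_pos hi] at this
    exact this
  · intro j hj
    have hj' := Finset.mem_Icc.mp hj
    have := hc2 j hj'.1 hj'.2
    simp only [hQ', if_neg (show ¬ j = 0 by omega), if_pos hj] at this
    exact this

/-- A polynomial in `(x^{k+1}, y^{l+1})` of total degree at most `min k l` is zero. -/
lemma prodProjIdeal_eq_zero_of_totalDegree_le {k l : ℕ} {p : MvPolynomial (Fin 2) ℤ}
    (hp : p ∈ prodProjIdeal k l) (hdeg : p.totalDegree ≤ min k l) : p = 0 := by
  classical
  rw [prodProjIdeal, Ideal.mem_span_pair] at hp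
  obtain ⟨A, B, hAB⟩ := hp
  rw [← hAB] at hdeg ⊢
  by_contra hne
  obtain ⟨m, hm⟩ := MvPolynomial.ne_zero_iff.mp hne
  have hdm : m 0 + m 1 ≤ min k l := by
    have h1 : (m.sum fun _ e => e) ≤ (A * X 0 ^ (k + 1) + B * X 1 ^ (l + 1)).totalDegree :=
      MvPolynomial.le_totalDegree (MvPolynomial.mem_support_iff.mpr hm)
    have h2 : (m.sum fun _ e => e) = m 0 + m 1 := by
      rw [Finsupp.sum_fintype _ _ (fun _ => rfl)]
      exact Fin.sum_univ_two m
    omega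
  have hcoeff := hm
  rw [MvPolynomial.coeff_add] at hcoeff
  have hA : MvPolynomial.coeff m (A * X 0 ^ (k + 1)) = 0 := by
    rw [X_pow_eq_monomial, MvPolynomial.coeff_mul_monomial']
    rw [if_neg]
    intro hle
    have := (Finsupp.single_le_iff).mp hle
    omega
  have hB : MvPolynomial.coeff m (B * X 1 ^ (l + 1)) = 0 := by
    rw [X_pow_eq_monomial, MvPolynomial.coeff_mul_monomial']
    rw [if_neg]
    intro hle
    have := (Finsupp.single_le_iff).mp hle
    omega
  rw [hA, hB] at hcoeff
  exact hcoeff rfl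

/-- In `R = ℤ[x,y]/(x^{k+1}, y^{l+1})`, if `c_i ∈ R_i` (`1 ≤ i ≤ a`),
`d_j ∈ R_j` (`1 ≤ j ≤ b`), `a + b ≤ min k l`, and the Whitney-type relation
`(1 + c_1 + ⋯ + c_a)(1 + d_1 + ⋯ + d_b) = 1` holds, then all `c_i = 0` and all
`d_j = 0`. -/
theorem stmt_17 (k l : ℕ) (a b : ℕ) (hab : a + b ≤ min k l)
    (c d : ℕ → ProdProjRing k l)
    (hc : ∀ i, ProdProjRing.IsHomogeneous k l (c i) i)
    (hd : ∀ j, ProdProjRing.IsHomogeneous k l (d j) j)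
    (hWhitney :
      (1 + ∑ i ∈ Finset.Icc 1 a, c i) * (1 + ∑ j ∈ Finset.Icc 1 b, d j) = 1) :
    (∀ i ∈ Finset.Icc 1 a, c i = 0) ∧ (∀ j ∈ Finset.Icc 1 b, d j = 0) := by
  classical
  set mk := Ideal.Quotient.mk (prodProjIdeal k l) with hmk
  set P : ℕ → MvPolynomial (Fin 2) ℤ := fun i => (hc i).choose with hP
  set Q : ℕ → MvPolynomial (Fin 2) ℤ := fun j => (hd j).choose with hQ
  have hPs : ∀ i, (P i).IsHomogeneous i ∧ mk (P i) = c i := fun i => (hc i).choose_spec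
  have hQs : ∀ j, (Q j).IsHomogeneous j ∧ mk (Q j) = d j := fun j => (hd j).choose_spec
  set F : MvPolynomial (Fin 2) ℤ := 1 + ∑ i ∈ Finset.Icc 1 a, P i with hF
  set G : MvPolynomial (Fin 2) ℤ := 1 + ∑ j ∈ Finset.Icc 1 b, Q j with hG
  have hmkF : mk F = 1 + ∑ i ∈ Finset.Icc 1 a, c i := by
    rw [hF, map_add, map_one, map_sum]
    congr 1
    exact Finset.sum_congr rfl fun i _ => (hPs i).2
  have hmkG : mk G = 1 + ∑ j ∈ Finset.Icc 1 b, d j := by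
    rw [hG, map_add, map_one, map_sum]
    congr 1
    exact Finset.sum_congr rfl fun j _ => (hQs j).2
  have hmem : F * G - 1 ∈ prodProjIdeal k l := by
    rw [← Ideal.Quotient.eq_zero_iff_mem, map_sub, map_mul, map_one, hmkF, hmkG, hWhitney,
      sub_self]
  have hdegF : F.totalDegree ≤ a := by
    rw [hF]
    refine le_trans (totalDegree_add _ _) (max_le (by simp [totalDegree_one]) ?_)
    refine le_trans (totalDegree_finset_sum _ _) ?_
    apply Finset.sup_le
    intro i hi
    exact le_trans (hPs i).1.totalDegree_le (Finset.mem_Icc.mp hi).2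
  have hdegG : G.totalDegree ≤ b := by
    rw [hG]
    refine le_trans (totalDegree_add _ _) (max_le (by simp [totalDegree_one]) ?_)
    refine le_trans (totalDegree_finset_sum _ _) ?_
    apply Finset.sup_le
    intro j hj
    exact le_trans (hQs j).1.totalDegree_le (Finset.mem_Icc.mp hj).2
  have hdeg : (F * G - 1).totalDegree ≤ min k l := by
    have h1 : (F * G).totalDegree ≤ a + b :=
      le_trans (totalDegree_mul _ _) (add_le_add hdegF hdegG)
    have h2 : (F * G - 1).totalDegree ≤ max (F * G).totalDegree (1 : MvPolynomial (Fin 2) ℤ).totalDegree := by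
      rw [sub_eq_add_neg]
      refine le_trans (totalDegree_add _ _) ?_
      rw [totalDegree_neg]
    simp only [totalDegree_one] at h2
    omega
  have hFG : F * G = 1 := by
    have := prodProjIdeal_eq_zero_of_totalDegree_le hmem hdeg
    linear_combination this
  obtain ⟨h1, h2⟩ := whitney_poly a b P Q (fun i _ => (hPs i).1) (fun j _ => (hQs j).1)
    (by rw [← hF, ← hG]; exact hFG)
  constructor
  · intro i hi
    rw [← (hPs i).2, h1 i hi, map_zero]
  · intro j hj
    rw [← (hQs j).2, h2 j hj, map_zero]

end
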